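/- Let (G, M) be an instance of MaxNDP in which every terminal has degree 1 and capacity 1, let (f, x) be a feasible fractional solution with x(s) = x(t) for every pair (s,t) ∈ M, and let g be a feasible flow (respecting node capacities) that routes at least x(v)/α units of flow from each terminal v to a set S ⊆ V(G), where α ≥ 1. Then there exist a feasible fractional solution (f_1, x_1) with f_1 = f/3 (so |f_1| = |f|/3) and a feasible flow g_1 that routes at least x_1(v)/α units of flow from each terminal v to S and, moreover, for every pair (s,t) ∈ M and every vertex v ∈ S, g_1 sends the same amount of flow from s to v as from t to v. -/

import Mathlib

open SimpleGraph Finset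
open scoped Classical

namespace Paper

noncomputable section

variable {V : Type} [Fintype V] [DecidableEq V] {τ : Type} [Fintype τ]

/-! ### Multicommodity flows as weighted path systems -/

/-- Total amount of flow sent on paths from `u` to `v`. -/
def pairFlow {G : SimpleGraph V} (f : ∀ u v : V, G.Path u v → ℝ) (u v : V) : ℝ :=
  ∑ p : G.Path u v, f u v p

/-- Total amount of flow on paths using the edge `e`. -/
def edgeLoad {G : SimpleGraph V} (f : ∀ u v : V, G.Path u v → ℝ) (e : Sym2 V) : ℝ :=
  ∑ u, ∑ v, ∑ p : G.Path u v, if e ∈ (p : G.Walk u v).edges then f u v p else 0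

/-- Total amount of flow on paths using the vertex `w`. -/
def vertLoad {G : SimpleGraph V} (f : ∀ u v : V, G.Path u v → ℝ) (w : V) : ℝ :=
  ∑ u, ∑ v, ∑ p : G.Path u v, if w ∈ (p : G.Walk u v).support then f u v p else 0

/-- The marginal of `z`: the total amount of flow routed for `z`,
i.e. on paths having `z` as an endpoint. -/
def margOf {G : SimpleGraph V} (f : ∀ u v : V, G.Path u v → ℝ) (z : V) : ℝ :=
  (∑ v, pairFlow f z v) + ∑ u, pairFlow f u z

/-- The total value `|f|` of a multicommodity flow for the pairs `M`. -/
def valueOf {G : SimpleGraph V} (f : ∀ u v : V, G.Path u v → ℝ) (M : Finset (V × V)) : ℝ :=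
  ∑ m ∈ M, pairFlow f m.1 m.2

/-- The pairs `M` form a matching on the terminals: all the endpoints are distinct. -/
def PairsMatching (M : Finset (V × V)) : Prop :=
  (∀ m ∈ M, m.1 ≠ m.2) ∧
    ∀ m ∈ M, ∀ m' ∈ M, m ≠ m' →
      m.1 ≠ m'.1 ∧ m.1 ≠ m'.2 ∧ m.2 ≠ m'.1 ∧ m.2 ≠ m'.2

/-- `v` is a terminal of the collection of pairs `M`. -/
def Terminal (M : Finset (V × V)) (v : V) : Prop :=
  ∃ m ∈ M, m.1 = v ∨ m.2 = v

/-- A feasible fractional solution `(f, x)` to the multicommodity flow relaxation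
`EDP-LP` of MaxEDP (edge capacities): nonnegative flow between the pairs of `M` only,
routing `x_i ≤ 1` for each pair, satisfying the edge capacities.  The marginals `x`
are recovered as `pairFlow f` and `margOf f`. -/
structure EDPFlow (G : SimpleGraph V) (cap : Sym2 V → ℕ) (M : Finset (V × V)) where
  f : ∀ u v : V, G.Path u v → ℝ
  nonneg : ∀ u v p, 0 ≤ f u v p
  supp : ∀ u v, (u, v) ∉ M → ∀ p, f u v p = 0
  le_one : ∀ m ∈ M, pairFlow f m.1 m.2 ≤ 1
  feas : ∀ e : Sym2 V, edgeLoad f e ≤ (cap e : ℝ)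

def EDPFlow.value {G : SimpleGraph V} {cap : Sym2 V → ℕ} {M : Finset (V × V)}
    (F : EDPFlow G cap M) : ℝ := valueOf F.f M

def EDPFlow.marg {G : SimpleGraph V} {cap : Sym2 V → ℕ} {M : Finset (V × V)}
    (F : EDPFlow G cap M) (z : V) : ℝ := margOf F.f z

/-- A feasible fractional solution to the multicommodity flow relaxation of
MaxNDP (node capacities). -/
structure NDPFlow (G : SimpleGraph V) (cap : V → ℕ) (M : Finset (V × V)) where
  f : ∀ u v : V, G.Path u v → ℝ
  nonneg : ∀ u v p, 0 ≤ f u v p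
  supp : ∀ u v, (u, v) ∉ M → ∀ p, f u v p = 0
  le_one : ∀ m ∈ M, pairFlow f m.1 m.2 ≤ 1
  feas : ∀ w : V, vertLoad f w ≤ (cap w : ℝ)

def NDPFlow.value {G : SimpleGraph V} {cap : V → ℕ} {M : Finset (V × V)}
    (F : NDPFlow G cap M) : ℝ := valueOf F.f M

def NDPFlow.marg {G : SimpleGraph V} {cap : V → ℕ} {M : Finset (V × V)}
    (F : NDPFlow G cap M) (z : V) : ℝ := margOf F.f z

/-- There is a feasible integral routing (with congestion `con`) of at least `q`
of the pairs of `M`, subject to edge capacities: a subset `R ⊆ M` of size at least `q`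
together with a choice of a path for each pair of `R` such that every edge `e`
is on at most `con * cap e` of the chosen paths. -/
def HasEDPRouting (G : SimpleGraph V) (cap : Sym2 V → ℕ) (M : Finset (V × V))
    (con : ℕ) (q : ℝ) : Prop :=
  ∃ (R : Finset (V × V)) (route : ∀ m ∈ R, G.Path m.1 m.2),
    R ⊆ M ∧ q ≤ (R.card : ℝ) ∧
      ∀ e : Sym2 V,
        (R.attach.filter fun m => e ∈ (route m.1 m.2).val.edges).card ≤ con * cap e

/-- There is a feasible integral routing (with congestion `con`) of at least `q`
of the pairs of `M`, subject to node capacities. -/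
def HasNDPRouting (G : SimpleGraph V) (cap : V → ℕ) (M : Finset (V × V))
    (con : ℕ) (q : ℝ) : Prop :=
  ∃ (R : Finset (V × V)) (route : ∀ m ∈ R, G.Path m.1 m.2),
    R ⊆ M ∧ q ≤ (R.card : ℝ) ∧
      ∀ w : V,
        (R.attach.filter fun m => w ∈ (route m.1 m.2).val.support).card ≤ con * cap w

/-! ### Induced subgraphs on vertex subsets -/

/-- The subgraph of `G` induced on `U` (as a graph on the same vertex set, with all
vertices outside `U` isolated). -/
def restrictG (G : SimpleGraph V) (U : Set V) : SimpleGraph V where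
  Adj u v := u ∈ U ∧ v ∈ U ∧ G.Adj u v
  symm := ⟨fun u v h => ⟨h.2.1, h.1, h.2.2.symm⟩⟩
  loopless := ⟨fun v h => G.loopless.irrefl v h.2.2⟩

lemma restrictG_le (G : SimpleGraph V) (U : Set V) : restrictG G U ≤ G :=
  fun _ _ h => h.2.2

/-- Push a path along a subgraph inclusion. -/
def pathMapLe {G G' : SimpleGraph V} (h : G ≤ G') {u v : V} (p : G.Path u v) :
    G'.Path u v :=
  ⟨(p : G.Walk u v).mapLe h, (SimpleGraph.Walk.mapLe_isPath h).mpr p.prop⟩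

/-- The vertex set `s` is (nonempty and) connected in `G`. -/
def ConnOn (G : SimpleGraph V) (s : Finset V) : Prop :=
  s.Nonempty ∧ ∀ u ∈ s, ∀ v ∈ s, (restrictG G ↑s).Reachable u v

/-! ### Rooted tree decompositions -/

/-- The parent adhesion `σ(t) = β(t) ∩ β(parent t)` (empty at the root). -/
def sigmaOf (parent : τ → τ) (root : τ) (bag : τ → Finset V) (t : τ) : Finset V :=
  if t = root then ∅ else bag t ∩ bag (parent t)

/-- `γ(t)`: the union of the bags at the descendants of `t`. -/
def gammaOf (parent : τ → τ) (bag : τ → Finset V) (t : τ) : Finset V :=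
  Finset.univ.filter fun v => ∃ s, (∃ n, parent^[n] s = t) ∧ v ∈ bag s

/-- A rooted tree decomposition of `G`, encoded by the parent map of the rooted
tree on the node set `τ`.  The last two axioms state that for every vertex `v` the
set of nodes whose bag contains `v` is connected in the tree (it is closed under
taking intermediate ancestors, and any two such nodes have a common ancestor
whose bag still contains `v`). -/
structure TreeDecomp (τ : Type) [Fintype τ] {V : Type} [Fintype V] [DecidableEq V]
    (G : SimpleGraph V) where
  root : τ
  parent : τ → τ
  parent_root : parent root = root
  reach_root : ∀ t : τ, ∃ n : ℕ, parent^[n] t = root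
  bag : τ → Finset V
  edge_in_bag : ∀ u v : V, G.Adj u v → ∃ t, u ∈ bag t ∧ v ∈ bag t
  vert_in_bag : ∀ v : V, ∃ t, v ∈ bag t
  interval : ∀ (v : V) (t : τ) (m n : ℕ), m ≤ n → v ∈ bag t → v ∈ bag (parent^[n] t) →
    v ∈ bag (parent^[m] t)
  meet : ∀ (v : V) (t s : τ), v ∈ bag t → v ∈ bag s →
    ∃ m n : ℕ, parent^[m] t = parent^[n] s ∧ v ∈ bag (parent^[m] t)

variable {G : SimpleGraph V}

/-- The tree of the decomposition is a path rooted at one of its endpoints: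
every node has at most one child. -/
def TreeDecomp.IsPathDecomp (D : TreeDecomp τ G) : Prop :=
  ∀ t s : τ, D.parent t = D.parent s → t ≠ D.parent t → s ≠ D.parent s → t = s

def TreeDecomp.sigma (D : TreeDecomp τ G) (t : τ) : Finset V :=
  sigmaOf D.parent D.root D.bag t

def TreeDecomp.gamma (D : TreeDecomp τ G) (t : τ) : Finset V :=
  gammaOf D.parent D.bag t

def TreeDecomp.alpha (D : TreeDecomp τ G) (t : τ) : Finset V :=
  D.gamma t \ D.sigma t

/-- The graph `G(t) = G[γ(t)] − E(G[σ(t)])`. -/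
def TreeDecomp.Gt (D : TreeDecomp τ G) (t : τ) : SimpleGraph V where
  Adj u v := G.Adj u v ∧ u ∈ D.gamma t ∧ v ∈ D.gamma t ∧ ¬(u ∈ D.sigma t ∧ v ∈ D.sigma t)
  symm := ⟨fun u v h => ⟨h.1.symm, h.2.2.1, h.2.1, fun hc => h.2.2.2 ⟨hc.2, hc.1⟩⟩⟩
  loopless := ⟨fun v h => G.loopless.irrefl v h.1⟩

/-! ### Flows to a set of vertices -/

/-- A feasible (edge-capacitated) flow in `H` whose flow paths all end in `S`. -/
structure EFlowToSet (H : SimpleGraph V) (cap : Sym2 V → ℕ) (S : Finset V) where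
  g : ∀ u v : V, H.Path u v → ℝ
  nonneg : ∀ u v p, 0 ≤ g u v p
  ends : ∀ u v p, g u v p ≠ 0 → v ∈ S
  feas : ∀ e : Sym2 V, edgeLoad g e ≤ (cap e : ℝ)

/-- The amount of flow routed from `z` (to the target set). -/
def EFlowToSet.fromAmt {H : SimpleGraph V} {cap : Sym2 V → ℕ} {S : Finset V}
    (F : EFlowToSet H cap S) (z : V) : ℝ :=
  ∑ v, pairFlow F.g z v

/-- A feasible (node-capacitated) flow in `H` whose flow paths all end in `S`. -/
structure NFlowToSet (H : SimpleGraph V) (cap : V → ℕ) (S : Finset V) where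
  g : ∀ u v : V, H.Path u v → ℝ
  nonneg : ∀ u v p, 0 ≤ g u v p
  ends : ∀ u v p, g u v p ≠ 0 → v ∈ S
  feas : ∀ w : V, vertLoad g w ≤ (cap w : ℝ)

def NFlowToSet.fromAmt {H : SimpleGraph V} {cap : V → ℕ} {S : Finset V}
    (F : NFlowToSet H cap S) (z : V) : ℝ :=
  ∑ v, pairFlow F.g z v

/-! ### Safe and good nodes -/

/-- A node `t` is safe w.r.t. an (edge-capacitated) fractional solution `F` if some
feasible flow in `G(t)` routes at least `x(z)/(4r)` from every `z ∈ γ(t)` to `σ(t)`. -/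
def ESafe {M : Finset (V × V)} (cap : Sym2 V → ℕ) (D : TreeDecomp τ G) (r : ℕ)
    (F : EDPFlow G cap M) (t : τ) : Prop :=
  ∃ gf : EFlowToSet (D.Gt t) cap (D.sigma t),
    ∀ z ∈ D.gamma t, F.marg z / (4 * (r : ℝ)) ≤ gf.fromAmt z

/-- A node `t` is safe w.r.t. a node-capacitated fractional solution `F`. -/
def NSafe {M : Finset (V × V)} (cap : V → ℕ) (D : TreeDecomp τ G) (r : ℕ)
    (F : NDPFlow G cap M) (t : τ) : Prop :=
  ∃ gf : NFlowToSet (D.Gt t) cap (D.sigma t),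
    ∀ z ∈ D.gamma t, F.marg z / (4 * (r : ℝ)) ≤ gf.fromAmt z

/-- `t` is good w.r.t. a flow `f` (for the decomposition data `parent`, `root`, `bag`):
every flow path in the support of `f` with an endpoint in `γ(t)` intersects `σ(t)`. -/
def GoodWrt {G : SimpleGraph V} (f : ∀ u v : V, G.Path u v → ℝ)
    (parent : τ → τ) (root : τ) (bag : τ → Finset V) (t : τ) : Prop :=
  ∀ (u v : V) (p : G.Path u v), f u v p ≠ 0 →
    (u ∈ gammaOf parent bag t ∨ v ∈ gammaOf parent bag t) →
    ∃ w ∈ sigmaOf parent root bag t, w ∈ (p : G.Walk u v).support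

def EGood {M : Finset (V × V)} {cap : Sym2 V → ℕ} (D : TreeDecomp τ G)
    (F : EDPFlow G cap M) (t : τ) : Prop :=
  GoodWrt F.f D.parent D.root D.bag t

def NGood {M : Finset (V × V)} {cap : V → ℕ} (D : TreeDecomp τ G)
    (F : NDPFlow G cap M) (t : τ) : Prop :=
  GoodWrt F.f D.parent D.root D.bag t

/-- The total capacity of the edge cut `δ(U)`. -/
def cutCap (G : SimpleGraph V) (cap : Sym2 V → ℕ) (U : Finset V) : ℝ :=
  ∑ u ∈ U, ∑ v ∈ Uᶜ, if G.Adj u v then (cap s(u, v) : ℝ) else 0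

/-! ### Multicommodity flows with demands, well-linkedness -/

/-- A feasible edge-capacitated multicommodity flow routing at least `dem u v`
between every pair `(u, v)`. -/
structure EMCFlow (H : SimpleGraph V) (cap : Sym2 V → ℕ) (dem : V → V → ℝ) where
  g : ∀ u v : V, H.Path u v → ℝ
  nonneg : ∀ u v p, 0 ≤ g u v p
  routes : ∀ u v : V, dem u v ≤ pairFlow g u v
  feas : ∀ e : Sym2 V, edgeLoad g e ≤ (cap e : ℝ)

/-- A feasible node-capacitated multicommodity flow routing at least `dem u v`
between every pair `(u, v)`. -/
structure NMCFlow (H : SimpleGraph V) (cap : V → ℕ) (dem : V → V → ℝ) where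
  g : ∀ u v : V, H.Path u v → ℝ
  nonneg : ∀ u v p, 0 ≤ g u v p
  routes : ∀ u v : V, dem u v ≤ pairFlow g u v
  feas : ∀ w : V, vertLoad g w ≤ (cap w : ℝ)

/-- `X` is `π`-flow-well-linked in the edge-capacitated graph `H`. -/
def FlowWellLinked (H : SimpleGraph V) (cap : Sym2 V → ℕ) (X : Finset V)
    (π : V → ℝ) : Prop :=
  Nonempty (EMCFlow H cap fun u v =>
    if u ∈ X ∧ v ∈ X then π u * π v / (∑ w ∈ X, π w) else 0)

/-- The pairs of `M` with both endpoints in `s`. -/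
def inducedPairs (M : Finset (V × V)) (s : Finset V) : Finset (V × V) :=
  M.filter fun m => m.1 ∈ s ∧ m.2 ∈ s

/-- The set of endpoints of the pairs of `M`. -/
def endpointsOf (M : Finset (V × V)) : Finset V :=
  M.image Prod.fst ∪ M.image Prod.snd

/-! ### Minors, graph classes, torsos -/

/-- `H` is a minor of `G`, via disjoint connected branch sets. -/
def IsMinorOf {W : Type} (H : SimpleGraph W) (G : SimpleGraph V) : Prop :=
  ∃ φ : W → Finset V,
    (∀ w, ConnOn G (φ w)) ∧
    (∀ w w', w ≠ w' → Disjoint (φ w) (φ w')) ∧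
    (∀ w w', H.Adj w w' → ∃ a ∈ φ w, ∃ b ∈ φ w', G.Adj a b)

/-- A class of (finite) graphs, given by its members on the canonical vertex sets. -/
def MinorClosed (𝒢 : ∀ n : ℕ, SimpleGraph (Fin n) → Prop) : Prop :=
  ∀ {n m : ℕ} (G : SimpleGraph (Fin n)) (H : SimpleGraph (Fin m)),
    𝒢 n G → IsMinorOf H G → 𝒢 m H

/-- A finite graph belongs to the class `𝒢` (up to isomorphism). -/
def InClass (𝒢 : ∀ n : ℕ, SimpleGraph (Fin n) → Prop) {W : Type}
    (H : SimpleGraph W) : Prop :=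
  ∃ (n : ℕ) (H' : SimpleGraph (Fin n)), 𝒢 n H' ∧ Nonempty (H ≃g H')

/-- The torso at `t`: the subgraph induced on `β(t)`, with all adhesions of tree edges
incident to `t` turned into cliques (as a graph on `V`; restrict to the bag to get
the usual torso). -/
def TreeDecomp.torso (D : TreeDecomp τ G) (t : τ) : SimpleGraph V :=
  SimpleGraph.fromRel fun u v =>
    u ∈ D.bag t ∧ v ∈ D.bag t ∧
      (G.Adj u v ∨ (u ∈ D.sigma t ∧ v ∈ D.sigma t) ∨
        ∃ s : τ, s ≠ D.root ∧ D.parent s = t ∧ u ∈ D.sigma s ∧ v ∈ D.sigma s)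

/-! ### Treedepth -/

/-- The connected component of `v` in `G` restricted to `s`. -/
def compOf (G : SimpleGraph V) (s : Finset V) (v : V) : Finset V :=
  s.filter fun u => (restrictG G ↑s).Reachable v u

/-- Treedepth of `G[s]`, computed with fuel (the recursion terminates before the
fuel runs out, since both deleting a vertex and passing to a connected component of
a disconnected graph strictly decrease the number of vertices). -/
def tdAux (G : SimpleGraph V) : ℕ → Finset V → ℕ
  | 0, _ => 0
  | fuel + 1, s =>
    if hs : s.Nonempty then
      if ConnOn G s then
        1 + s.inf' hs fun v => tdAux G fuel (s.erase v)
      else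
        s.sup fun v => tdAux G fuel (compOf G s v)
    else 0

/-- The treedepth of the subgraph of `G` induced on `s`:  `td(∅) = 0`;
`td(G) = 1 + min_v td(G − v)` for a connected nonempty `G`; and `td(G)` is the maximum
of the treedepths of the connected components for a disconnected `G`. -/
def treedepth (G : SimpleGraph V) (s : Finset V) : ℕ :=
  tdAux G s.card s

end

/-! ### Auxiliary material for `symmetrize_flow` -/

noncomputable section SymAux

variable {V : Type} [Fintype V] [DecidableEq V] {G : SimpleGraph V}

/-- Path reversal as an equivalence. -/
def pathReverseEquiv (G : SimpleGraph V) (u v : V) : G.Path u v ≃ G.Path v u where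
  toFun := Path.reverse
  invFun := Path.reverse
  left_inv p := Subtype.ext (Walk.reverse_reverse _)
  right_inv p := Subtype.ext (Walk.reverse_reverse _)

lemma sum_path_reverse (u v : V) (h : G.Path v u → ℝ) :
    ∑ p : G.Path u v, h p.reverse = ∑ q : G.Path v u, h q :=
  Fintype.sum_equiv (pathReverseEquiv G u v) _ _ (fun _ => rfl)

/-- Concatenate a flow from `s` to `t` with a flow out of `t`. -/
def concatFlow (G : SimpleGraph V) (s t : V) (w1 : G.Path s t → ℝ)
    (w2 : ∀ v : V, G.Path t v → ℝ) (v : V) (p : G.Path s v) : ℝ :=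
  ∑ p₁ : G.Path s t, ∑ q : G.Path t v,
    if ((p₁ : G.Walk s t).append (q : G.Walk t v)).toPath = p then w1 p₁ * w2 v q else 0

lemma concatFlow_nonneg {s t : V} {w1 : G.Path s t → ℝ} {w2 : ∀ v : V, G.Path t v → ℝ}
    (h1 : ∀ p₁, 0 ≤ w1 p₁) (h2 : ∀ v q, 0 ≤ w2 v q) (v : V) (p : G.Path s v) :
    0 ≤ concatFlow G s t w1 w2 v p := by
  refine Finset.sum_nonneg fun p₁ _ => Finset.sum_nonneg fun q _ => ?_
  split
  · exact mul_nonneg (h1 _) (h2 _ _)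
  · exact le_rfl

lemma sum_concatFlow {s t : V} (w1 : G.Path s t → ℝ) (w2 : ∀ v : V, G.Path t v → ℝ)
    (v : V) :
    ∑ p : G.Path s v, concatFlow G s t w1 w2 v p
      = (∑ p₁ : G.Path s t, w1 p₁) * ∑ q : G.Path t v, w2 v q := by
  unfold concatFlow
  rw [Finset.sum_comm, Finset.sum_mul]
  refine Finset.sum_congr rfl fun p₁ _ => ?_
  rw [Finset.sum_comm, Finset.mul_sum]
  refine Finset.sum_congr rfl fun q _ => ?_
  simp

lemma load_concatFlow {s t : V} (w1 : G.Path s t → ℝ) (w2 : ∀ v : V, G.Path t v → ℝ)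
    (w : V) (h1 : ∀ p₁, 0 ≤ w1 p₁) (h2 : ∀ v q, 0 ≤ w2 v q) :
    (∑ v, ∑ p : G.Path s v,
        if w ∈ (p : G.Walk s v).support then concatFlow G s t w1 w2 v p else 0)
      ≤ (∑ p₁ : G.Path s t, if w ∈ (p₁ : G.Walk s t).support then w1 p₁ else 0)
          * (∑ v, ∑ q : G.Path t v, w2 v q)
        + (∑ p₁ : G.Path s t, w1 p₁)
          * ∑ v, ∑ q : G.Path t v, if w ∈ (q : G.Walk t v).support then w2 v q else 0 := by
  have step1 : ∀ v : V,
      (∑ p : G.Path s v,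
          if w ∈ (p : G.Walk s v).support then concatFlow G s t w1 w2 v p else 0)
        = ∑ p₁ : G.Path s t, ∑ q : G.Path t v,
            if w ∈ ((((p₁ : G.Walk s t).append (q : G.Walk t v)).toPath : G.Walk s v)).support
            then w1 p₁ * w2 v q else 0 := by
    intro v
    unfold concatFlow
    have e1 : ∀ p : G.Path s v,
        (if w ∈ (p : G.Walk s v).support then
            (∑ p₁ : G.Path s t, ∑ q : G.Path t v,
              if ((p₁ : G.Walk s t).append (q : G.Walk t v)).toPath = p
              then w1 p₁ * w2 v q else 0) else 0)
          = ∑ p₁ : G.Path s t, ∑ q : G.Path t v,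
              if ((p₁ : G.Walk s t).append (q : G.Walk t v)).toPath = p then
                (if w ∈ (p : G.Walk s v).support then w1 p₁ * w2 v q else 0) else 0 := by
      intro p
      split
      · refine Finset.sum_congr rfl fun p₁ _ => Finset.sum_congr rfl fun q _ => ?_
        split <;> simp_all
      · symm
        refine Finset.sum_eq_zero fun p₁ _ => Finset.sum_eq_zero fun q _ => ?_
        split <;> simp_all
    rw [Finset.sum_congr rfl fun p _ => e1 p, Finset.sum_comm]
    refine Finset.sum_congr rfl fun p₁ _ => ?_
    rw [Finset.sum_comm]
    refine Finset.sum_congr rfl fun q _ => ?_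
    have : ∀ p : G.Path s v,
        (if ((p₁ : G.Walk s t).append (q : G.Walk t v)).toPath = p then
          (if w ∈ (p : G.Walk s v).support then w1 p₁ * w2 v q else 0) else 0)
        = (if ((p₁ : G.Walk s t).append (q : G.Walk t v)).toPath = p then
            (if w ∈ ((((p₁ : G.Walk s t).append (q : G.Walk t v)).toPath : G.Walk s v)).support
              then w1 p₁ * w2 v q else 0) else 0) := by
      intro p
      split
      · rename_i h; rw [← h]
      · rfl
    rw [Finset.sum_congr rfl fun p _ => this p]
    simp
  calc (∑ v, ∑ p : G.Path s v,
        if w ∈ (p : G.Walk s v).support then concatFlow G s t w1 w2 v p else 0)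
      = ∑ v, ∑ p₁ : G.Path s t, ∑ q : G.Path t v,
          if w ∈ ((((p₁ : G.Walk s t).append (q : G.Walk t v)).toPath : G.Walk s v)).support
          then w1 p₁ * w2 v q else 0 := Finset.sum_congr rfl fun v _ => step1 v
    _ ≤ ∑ v, ∑ p₁ : G.Path s t, ∑ q : G.Path t v,
          ((if w ∈ (p₁ : G.Walk s t).support then w1 p₁ else 0) * w2 v q
            + w1 p₁ * (if w ∈ (q : G.Walk t v).support then w2 v q else 0)) := by
        refine Finset.sum_le_sum fun v _ => Finset.sum_le_sum fun p₁ _ =>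
          Finset.sum_le_sum fun q _ => ?_
        have hq0 : (0:ℝ) ≤ if w ∈ (q : G.Walk t v).support then w2 v q else 0 := by
          split
          · exact h2 v q
          · exact le_rfl
        have hp0 : (0:ℝ) ≤ if w ∈ (p₁ : G.Walk s t).support then w1 p₁ else 0 := by
          split
          · exact h1 p₁
          · exact le_rfl
        split
        · rename_i hmem
          have hsub := Walk.support_toPath_subset ((p₁ : G.Walk s t).append (q : G.Walk t v))
          have hor := (Walk.mem_support_append_iff _ _).mp (hsub hmem)
          rcases hor with h | h
          · rw [if_pos h]
            have := mul_nonneg (h1 p₁) hq0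
            linarith
          · rw [if_pos h]
            have := mul_nonneg hp0 (h2 v q)
            linarith
        · have := mul_nonneg hp0 (h2 v q)
          have := mul_nonneg (h1 p₁) hq0
          linarith
    _ = _ := by
        simp only [Finset.sum_add_distrib]
        congr 1
        · rw [Finset.sum_comm, Finset.sum_mul]
          refine Finset.sum_congr rfl fun p₁ _ => ?_
          rw [Finset.mul_sum]
          exact Finset.sum_congr rfl fun v _ => (Finset.mul_sum _ _ _).symm
        · rw [Finset.sum_comm, Finset.sum_mul]
          refine Finset.sum_congr rfl fun p₁ _ => ?_
          rw [Finset.mul_sum]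
          exact Finset.sum_congr rfl fun v _ => (Finset.mul_sum _ _ _).symm

section Core

variable {cap : V → ℕ} {M : Finset (V × V)} {S : Finset V}

lemma pairFlow_nonneg' {f : ∀ u v : V, G.Path u v → ℝ} (h : ∀ u v p, 0 ≤ f u v p)
    (u v : V) : 0 ≤ pairFlow f u v :=
  Finset.sum_nonneg fun _ _ => h _ _ _

lemma margOf_nonneg' {f : ∀ u v : V, G.Path u v → ℝ} (h : ∀ u v p, 0 ≤ f u v p)
    (z : V) : 0 ≤ margOf f z :=
  add_nonneg (Finset.sum_nonneg fun _ _ => pairFlow_nonneg' h _ _)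
    (Finset.sum_nonneg fun _ _ => pairFlow_nonneg' h _ _)

lemma NDP_marg_nonneg (F : NDPFlow G cap M) (z : V) : 0 ≤ F.marg z :=
  margOf_nonneg' F.nonneg z

lemma fromAmt_nonneg' (g : NFlowToSet G cap S) (z : V) : 0 ≤ g.fromAmt z :=
  Finset.sum_nonneg fun _ _ => pairFlow_nonneg' g.nonneg _ _

lemma pairFlow_zero_of_not_mem (F : NDPFlow G cap M) {u v : V} (h : (u, v) ∉ M) :
    pairFlow F.f u v = 0 :=
  Finset.sum_eq_zero fun p _ => F.supp u v h p

/-- Truncation factor for `g` at `z`. -/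
def lamOf (F : NDPFlow G cap M) (g : NFlowToSet G cap S) (α : ℝ) (z : V) : ℝ :=
  F.marg z / α / g.fromAmt z

/-- The symmetrized flow. -/
def symG (F : NDPFlow G cap M) (g : NFlowToSet G cap S) (α : ℝ) (u v : V)
    (p : G.Path u v) : ℝ :=
  lamOf F g α u * g.g u v p / 6
    + (∑ t : V, lamOf F g α t / F.marg t *
        concatFlow G u t (fun p₁ => F.f u t p₁ + F.f t u p₁.reverse) (g.g t) v p) / 6

variable {F : NDPFlow G cap M} {g : NFlowToSet G cap S} {α : ℝ}

lemma lamOf_nonneg (h0α : 0 < α) (z : V) : 0 ≤ lamOf F g α z :=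
  div_nonneg (div_nonneg (NDP_marg_nonneg F z) h0α.le) (fromAmt_nonneg' g z)

lemma lamOf_zero (hm : F.marg z = 0) : lamOf F g α z = 0 := by
  simp [lamOf, hm]

lemma lamOf_le_one (hα : 1 ≤ α)
    (hz : F.marg z = 0 ∨ F.marg z / α ≤ g.fromAmt z) : lamOf F g α z ≤ 1 := by
  rcases hz with hz | hz
  · rw [lamOf_zero hz]; norm_num
  · rcases eq_or_lt_of_le (fromAmt_nonneg' g z) with h0 | h0
    · rw [lamOf, ← h0, div_zero]; norm_num
    · exact (div_le_one h0).mpr hz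

lemma coef_mul_marg (z : V) :
    lamOf F g α z / F.marg z * F.marg z = lamOf F g α z := by
  by_cases hm : F.marg z = 0
  · rw [hm, mul_zero, lamOf_zero hm]
  · exact div_mul_cancel₀ _ hm

lemma coef_mul_marg_le_one (hα : 1 ≤ α)
    (hz : F.marg z = 0 ∨ F.marg z / α ≤ g.fromAmt z) :
    lamOf F g α z / F.marg z * F.marg z ≤ 1 := by
  rw [coef_mul_marg]; exact lamOf_le_one hα hz

lemma coef_mul_fromAmt_le_one (hα : 1 ≤ α) (z : V) :
    lamOf F g α z / F.marg z * g.fromAmt z ≤ 1 := by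
  have h0α : (0:ℝ) < α := lt_of_lt_of_le one_pos hα
  by_cases hf : g.fromAmt z = 0
  · rw [hf, mul_zero]; norm_num
  · by_cases hm : F.marg z = 0
    · rw [lamOf_zero hm, zero_div, zero_mul]; norm_num
    · have h1 : lamOf F g α z * g.fromAmt z = F.marg z / α :=
        div_mul_cancel₀ _ hf
      rw [div_mul_eq_mul_div, h1, div_div, mul_comm, ← div_div, div_self hm]
      rw [div_le_one h0α]
      exact hα

lemma lam_mul_fromAmt (h0α : 0 < α) {z : V}
    (hzg : F.marg z / α ≤ g.fromAmt z) :
    lamOf F g α z * g.fromAmt z = F.marg z / α := by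
  by_cases hf : g.fromAmt z = 0
  · rw [hf, mul_zero]
    have h1 : F.marg z / α ≤ 0 := hf ▸ hzg
    have h2 : 0 ≤ F.marg z / α := div_nonneg (NDP_marg_nonneg F z) h0α.le
    linarith
  · exact div_mul_cancel₀ _ hf

lemma sum_w1 (F : NDPFlow G cap M) (u t : V) :
    ∑ p₁ : G.Path u t, (F.f u t p₁ + F.f t u p₁.reverse)
      = pairFlow F.f u t + pairFlow F.f t u := by
  rw [Finset.sum_add_distrib]
  congr 1
  exact sum_path_reverse u t (F.f t u)

lemma pairFlow_symG (u v : V) :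
    pairFlow (symG F g α) u v
      = lamOf F g α u * pairFlow g.g u v / 6
        + (∑ t : V, lamOf F g α t / F.marg t *
            ((pairFlow F.f u t + pairFlow F.f t u) * pairFlow g.g t v)) / 6 := by
  unfold pairFlow symG
  rw [Finset.sum_add_distrib, ← Finset.sum_div, ← Finset.sum_div, ← Finset.mul_sum]
  congr 2
  rw [Finset.sum_comm]
  refine Finset.sum_congr rfl fun t _ => ?_
  rw [← Finset.mul_sum, sum_concatFlow, sum_w1]
  simp [pairFlow]

lemma symG_nonneg (h0α : 0 < α) (u v : V) (p : G.Path u v) :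
    0 ≤ symG F g α u v p := by
  have h1 : 0 ≤ lamOf F g α u * g.g u v p :=
    mul_nonneg (lamOf_nonneg h0α u) (g.nonneg u v p)
  have h2 : 0 ≤ ∑ t : V, lamOf F g α t / F.marg t *
      concatFlow G u t (fun p₁ => F.f u t p₁ + F.f t u p₁.reverse) (g.g t) v p := by
    refine Finset.sum_nonneg fun t _ => mul_nonneg ?_ ?_
    · exact div_nonneg (lamOf_nonneg h0α t) (NDP_marg_nonneg F t)
    · exact concatFlow_nonneg (fun p₁ => add_nonneg (F.nonneg _ _ _) (F.nonneg _ _ _))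
        (fun v q => g.nonneg _ _ _) v p
  exact add_nonneg (div_nonneg h1 (by norm_num)) (div_nonneg h2 (by norm_num))

lemma symG_ends (u v : V) (p : G.Path u v) (h : symG F g α u v p ≠ 0) : v ∈ S := by
  by_contra hv
  have hz : ∀ t (q : G.Path t v), g.g t v q = 0 := fun t q => by
    by_contra h'
    exact hv (g.ends t v q h')
  exact h (by simp [symG, concatFlow, hz])

lemma vertLoad_add (f1 f2 : ∀ u v : V, G.Path u v → ℝ) (w : V) :
    vertLoad (fun u v p => f1 u v p + f2 u v p) w = vertLoad f1 w + vertLoad f2 w := by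
  unfold vertLoad
  rw [← Finset.sum_add_distrib]
  refine Finset.sum_congr rfl fun u _ => ?_
  rw [← Finset.sum_add_distrib]
  refine Finset.sum_congr rfl fun v _ => ?_
  rw [← Finset.sum_add_distrib]
  refine Finset.sum_congr rfl fun p _ => ?_
  split <;> simp

lemma vertLoad_div (f1 : ∀ u v : V, G.Path u v → ℝ) (c : ℝ) (w : V) :
    vertLoad (fun u v p => f1 u v p / c) w = vertLoad f1 w / c := by
  unfold vertLoad
  rw [Finset.sum_div]
  refine Finset.sum_congr rfl fun u _ => ?_
  rw [Finset.sum_div]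
  refine Finset.sum_congr rfl fun v _ => ?_
  rw [Finset.sum_div]
  refine Finset.sum_congr rfl fun p _ => ?_
  split <;> simp

lemma vertLoad_mono (f1 f2 : ∀ u v : V, G.Path u v → ℝ) (w : V)
    (h : ∀ u v p, f1 u v p ≤ f2 u v p) : vertLoad f1 w ≤ vertLoad f2 w := by
  refine Finset.sum_le_sum fun u _ => Finset.sum_le_sum fun v _ =>
    Finset.sum_le_sum fun p _ => ?_
  split
  · exact h u v p
  · exact le_rfl

lemma symG_feas (hα : 1 ≤ α)
    (hkey : ∀ z, F.marg z = 0 ∨ F.marg z / α ≤ g.fromAmt z) (w : V) :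
    vertLoad (symG F g α) w ≤ (cap w : ℝ) := by
  have h0α : (0:ℝ) < α := lt_of_lt_of_le one_pos hα
  set D : ∀ u v : V, G.Path u v → ℝ := fun u v p => lamOf F g α u * g.g u v p with hD
  set T : ∀ u v : V, G.Path u v → ℝ := fun u v p => ∑ t : V,
      lamOf F g α t / F.marg t *
        concatFlow G u t (fun p₁ => F.f u t p₁ + F.f t u p₁.reverse) (g.g t) v p with hT
  have hsplit : vertLoad (symG F g α) w = vertLoad D w / 6 + vertLoad T w / 6 := by
    have hfun : symG F g α = fun u v p => D u v p / 6 + T u v p / 6 := by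
      funext u v p
      simp only [symG, hD, hT]
    rw [hfun, vertLoad_add, vertLoad_div, vertLoad_div]
  have hDle : vertLoad D w ≤ vertLoad g.g w :=
    vertLoad_mono _ _ w fun u v p =>
      mul_le_of_le_one_left (g.nonneg u v p) (lamOf_le_one hα (hkey u))
  set A : V → V → ℝ := fun u t => ∑ p₁ : G.Path u t,
      if w ∈ (p₁ : G.Walk u t).support then F.f u t p₁ + F.f t u p₁.reverse else 0 with hA
  set Bl : V → ℝ := fun t => ∑ v, ∑ q : G.Path t v,
      if w ∈ (q : G.Walk t v).support then g.g t v q else 0 with hBl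
  have hA0 : ∀ u t, 0 ≤ A u t := by
    intro u t
    refine Finset.sum_nonneg fun p₁ _ => ?_
    split
    · exact add_nonneg (F.nonneg _ _ _) (F.nonneg _ _ _)
    · exact le_rfl
  have hBl0 : ∀ t, 0 ≤ Bl t := by
    intro t
    refine Finset.sum_nonneg fun v _ => Finset.sum_nonneg fun q _ => ?_
    split
    · exact g.nonneg _ _ _
    · exact le_rfl
  have hfromAmt : ∀ t : V, (∑ v, ∑ q : G.Path t v, g.g t v q) = g.fromAmt t := by
    intro t
    unfold NFlowToSet.fromAmt pairFlow
    rfl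
  have hsumT : ∀ t : V,
      (∑ u, ∑ p₁ : G.Path u t, (F.f u t p₁ + F.f t u p₁.reverse)) = F.marg t := by
    intro t
    calc (∑ u, ∑ p₁ : G.Path u t, (F.f u t p₁ + F.f t u p₁.reverse))
        = ∑ u, (pairFlow F.f u t + pairFlow F.f t u) :=
          Finset.sum_congr rfl fun u _ => sum_w1 F u t
      _ = (∑ u, pairFlow F.f u t) + ∑ u, pairFlow F.f t u := Finset.sum_add_distrib
      _ = F.marg t := by rw [NDPFlow.marg, margOf, add_comm]
  have hsumA : (∑ u, ∑ t, A u t) = 2 * vertLoad F.f w := by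
    have hsplitA : ∀ u t : V, A u t
        = (∑ p₁ : G.Path u t, if w ∈ (p₁ : G.Walk u t).support then F.f u t p₁ else 0)
          + ∑ q : G.Path t u, if w ∈ (q : G.Walk t u).support then F.f t u q else 0 := by
      intro u t
      have e1 : A u t
          = (∑ p₁ : G.Path u t, if w ∈ (p₁ : G.Walk u t).support then F.f u t p₁ else 0)
            + ∑ p₁ : G.Path u t,
                if w ∈ (p₁ : G.Walk u t).support then F.f t u p₁.reverse else 0 := by
        rw [hA, ← Finset.sum_add_distrib]
        refine Finset.sum_congr rfl fun p₁ _ => ?_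
        split <;> simp
      rw [e1]
      congr 1
      have e2 : ∀ p₁ : G.Path u t,
          (if w ∈ (p₁ : G.Walk u t).support then F.f t u p₁.reverse else 0)
            = (fun q : G.Path t u =>
                if w ∈ (q : G.Walk t u).support then F.f t u q else 0) p₁.reverse := by
        intro p₁
        have hmem : w ∈ ((p₁.reverse : G.Path t u) : G.Walk t u).support
            ↔ w ∈ (p₁ : G.Walk u t).support := by
          show w ∈ ((p₁ : G.Walk u t).reverse).support ↔ _
          rw [Walk.support_reverse, List.mem_reverse]
        simp only [hmem]
      rw [Finset.sum_congr rfl fun p₁ _ => e2 p₁]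
      exact sum_path_reverse u t
        (fun q : G.Path t u => if w ∈ (q : G.Walk t u).support then F.f t u q else 0)
    calc (∑ u, ∑ t, A u t)
        = (∑ u, ∑ t, ∑ p₁ : G.Path u t,
            if w ∈ (p₁ : G.Walk u t).support then F.f u t p₁ else 0)
          + ∑ u, ∑ t, ∑ q : G.Path t u,
              if w ∈ (q : G.Walk t u).support then F.f t u q else 0 := by
          rw [← Finset.sum_add_distrib]
          refine Finset.sum_congr rfl fun u _ => ?_
          rw [← Finset.sum_add_distrib]
          exact Finset.sum_congr rfl fun t _ => hsplitA u t
      _ = vertLoad F.f w + vertLoad F.f w := by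
          have h2 : (∑ u, ∑ t, ∑ q : G.Path t u,
              if w ∈ (q : G.Walk t u).support then F.f t u q else 0)
              = vertLoad F.f w := by
            rw [Finset.sum_comm]
            unfold vertLoad
            rfl
          rw [h2]
          unfold vertLoad
          rfl
      _ = 2 * vertLoad F.f w := by ring
  have hsumBl : (∑ t, Bl t) = vertLoad g.g w := by
    simp only [hBl]
    unfold vertLoad
    rfl
  have e1 : vertLoad T w = ∑ u, ∑ t, lamOf F g α t / F.marg t *
      (∑ v, ∑ p : G.Path u v, if w ∈ (p : G.Walk u v).support then
        concatFlow G u t (fun p₁ => F.f u t p₁ + F.f t u p₁.reverse) (g.g t) v p else 0) := by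
    unfold vertLoad
    refine Finset.sum_congr rfl fun u _ => ?_
    calc (∑ v, ∑ p : G.Path u v, if w ∈ (p : G.Walk u v).support then T u v p else 0)
        = ∑ v, ∑ p : G.Path u v, ∑ t,
            (if w ∈ (p : G.Walk u v).support then lamOf F g α t / F.marg t *
              concatFlow G u t (fun p₁ => F.f u t p₁ + F.f t u p₁.reverse) (g.g t) v p
            else 0) := by
          refine Finset.sum_congr rfl fun v _ => Finset.sum_congr rfl fun p _ => ?_
          rw [hT]
          split <;> simp
      _ = ∑ t, ∑ v, ∑ p : G.Path u v,
            (if w ∈ (p : G.Walk u v).support then lamOf F g α t / F.marg t *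
              concatFlow G u t (fun p₁ => F.f u t p₁ + F.f t u p₁.reverse) (g.g t) v p
            else 0) := by
          rw [Finset.sum_congr rfl fun v _ => Finset.sum_comm, Finset.sum_comm]
      _ = ∑ t, lamOf F g α t / F.marg t *
            (∑ v, ∑ p : G.Path u v, if w ∈ (p : G.Walk u v).support then
              concatFlow G u t (fun p₁ => F.f u t p₁ + F.f t u p₁.reverse) (g.g t) v p
            else 0) := by
          refine Finset.sum_congr rfl fun t _ => ?_
          rw [Finset.mul_sum]
          refine Finset.sum_congr rfl fun v _ => ?_
          rw [Finset.mul_sum]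
          refine Finset.sum_congr rfl fun p _ => ?_
          split <;> simp
  have hTle : vertLoad T w ≤ ∑ u, ∑ t, lamOf F g α t / F.marg t *
      (A u t * g.fromAmt t
        + (∑ p₁ : G.Path u t, (F.f u t p₁ + F.f t u p₁.reverse)) * Bl t) := by
    rw [e1]
    refine Finset.sum_le_sum fun u _ => Finset.sum_le_sum fun t _ => ?_
    refine mul_le_mul_of_nonneg_left ?_
      (div_nonneg (lamOf_nonneg h0α t) (NDP_marg_nonneg F t))
    have := load_concatFlow (G := G) (s := u) (t := t)
      (fun p₁ => F.f u t p₁ + F.f t u p₁.reverse) (g.g t) w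
      (fun p₁ => add_nonneg (F.nonneg _ _ _) (F.nonneg _ _ _))
      (fun v q => g.nonneg _ _ _)
    rw [hfromAmt t] at this
    exact this
  have halg : (∑ u, ∑ t, lamOf F g α t / F.marg t *
      (A u t * g.fromAmt t
        + (∑ p₁ : G.Path u t, (F.f u t p₁ + F.f t u p₁.reverse)) * Bl t))
      = (∑ u, ∑ t, (lamOf F g α t / F.marg t * g.fromAmt t) * A u t)
        + ∑ t, (lamOf F g α t / F.marg t * F.marg t) * Bl t := by
    have e2 : ∀ u t : V, lamOf F g α t / F.marg t *
        (A u t * g.fromAmt t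
          + (∑ p₁ : G.Path u t, (F.f u t p₁ + F.f t u p₁.reverse)) * Bl t)
        = (lamOf F g α t / F.marg t * g.fromAmt t) * A u t
          + (lamOf F g α t / F.marg t * Bl t)
            * (∑ p₁ : G.Path u t, (F.f u t p₁ + F.f t u p₁.reverse)) := by
      intro u t; ring
    rw [Finset.sum_congr rfl fun u _ => Finset.sum_congr rfl fun t _ => e2 u t]
    rw [Finset.sum_congr rfl fun u (_ : u ∈ Finset.univ) => Finset.sum_add_distrib,
      Finset.sum_add_distrib]
    congr 1
    rw [Finset.sum_comm]
    refine Finset.sum_congr rfl fun t _ => ?_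
    rw [← Finset.mul_sum, hsumT t]
    ring
  have hb1 : (∑ u, ∑ t, (lamOf F g α t / F.marg t * g.fromAmt t) * A u t)
      ≤ ∑ u, ∑ t, A u t := by
    refine Finset.sum_le_sum fun u _ => Finset.sum_le_sum fun t _ => ?_
    exact mul_le_of_le_one_left (hA0 u t) (coef_mul_fromAmt_le_one hα t)
  have hb2 : (∑ t, (lamOf F g α t / F.marg t * F.marg t) * Bl t) ≤ ∑ t, Bl t := by
    refine Finset.sum_le_sum fun t _ => ?_
    exact mul_le_of_le_one_left (hBl0 t) (coef_mul_marg_le_one hα (hkey t))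
  have hcap0 : (0:ℝ) ≤ (cap w : ℝ) := Nat.cast_nonneg _
  have hFfeas := F.feas w
  have hgfeas := g.feas w
  have hTfinal : vertLoad T w ≤ 2 * vertLoad F.f w + vertLoad g.g w := by
    calc vertLoad T w ≤ _ := hTle
      _ = _ := halg
      _ ≤ (∑ u, ∑ t, A u t) + ∑ t, Bl t := add_le_add hb1 hb2
      _ = 2 * vertLoad F.f w + vertLoad g.g w := by rw [hsumA, hsumBl]
  rw [hsplit]
  linarith

end Core

end SymAux

/-- **Symmetrizing the flow `g`.**
Let `(G, M)` be a MaxNDP instance whose terminals all have degree `1` and capacity `1`,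
`F = (f, x)` a feasible fractional solution with equal marginals on the endpoints of
each pair, and `g` a feasible flow routing at least `x(v)/α` from each terminal `v` to
`S`, where `α ≥ 1`.  Then there are a feasible fractional solution `F₁` with
`f₁ = f/3` (so `|f₁| = |f|/3`) and a feasible flow `g₁` to `S` routing at least
`x₁(v)/α` from each terminal `v`, which moreover sends, for every pair `(s, t) ∈ M`
and every `v ∈ S`, the same amount of flow from `s` to `v` as from `t` to `v`. -/
theorem symmetrize_flow
    {V : Type} [Fintype V] [DecidableEq V] (G : SimpleGraph V) (cap : V → ℕ)
    (M : Finset (V × V)) (hM : PairsMatching M)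
    (hterm : ∀ v : V, Terminal M v → G.degree v = 1 ∧ cap v = 1)
    (F : NDPFlow G cap M) (hbal : ∀ m ∈ M, F.marg m.1 = F.marg m.2)
    (S : Finset V) (α : ℝ) (hα : 1 ≤ α)
    (g : NFlowToSet G cap S)
    (hg : ∀ v : V, Terminal M v → F.marg v / α ≤ g.fromAmt v) :
    ∃ F₁ : NDPFlow G cap M,
      (∀ (u v : V) (p : G.Path u v), F₁.f u v p = F.f u v p / 3) ∧
      F₁.value = F.value / 3 ∧
      ∃ g₁ : NFlowToSet G cap S,
        (∀ v : V, Terminal M v → F₁.marg v / α ≤ g₁.fromAmt v) ∧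
        ∀ m ∈ M, ∀ v ∈ S, pairFlow g₁.g m.1 v = pairFlow g₁.g m.2 v := by
  classical
  have h0α : (0:ℝ) < α := lt_of_lt_of_le one_pos hα
  have hkey : ∀ z, F.marg z = 0 ∨ F.marg z / α ≤ g.fromAmt z := by
    intro z
    by_cases hz : Terminal M z
    · exact Or.inr (hg z hz)
    · left
      have h1 : ∀ v, pairFlow F.f z v = 0 := fun v =>
        pairFlow_zero_of_not_mem F fun hm => hz ⟨(z, v), hm, Or.inl rfl⟩
      have h2 : ∀ u, pairFlow F.f u z = 0 := fun u =>
        pairFlow_zero_of_not_mem F fun hm => hz ⟨(u, z), hm, Or.inr rfl⟩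
      show margOf F.f z = 0
      unfold margOf
      rw [Finset.sum_eq_zero fun v _ => h1 v, Finset.sum_eq_zero fun u _ => h2 u, add_zero]
  have hMa : ∀ m ∈ M, ∀ t' : V, (t', m.1) ∉ M := by
    intro m hm t' hmem
    by_cases he : (t', m.1) = m
    · exact hM.1 m hm (congrArg Prod.snd he)
    · exact (hM.2 (t', m.1) hmem m hm he).2.2.1 rfl
  have hMb : ∀ m ∈ M, ∀ t' : V, (m.2, t') ∉ M := by
    intro m hm t' hmem
    by_cases he : (m.2, t') = m
    · exact hM.1 m hm (congrArg Prod.fst he).symm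
    · exact (hM.2 (m.2, t') hmem m hm he).2.1 rfl
  have hMc : ∀ m ∈ M, ∀ t' : V, t' ≠ m.2 → (m.1, t') ∉ M := by
    intro m hm t' ht' hmem
    by_cases he : (m.1, t') = m
    · exact ht' (congrArg Prod.snd he)
    · exact (hM.2 (m.1, t') hmem m hm he).1 rfl
  have hMd : ∀ m ∈ M, ∀ t' : V, t' ≠ m.1 → (t', m.2) ∉ M := by
    intro m hm t' ht' hmem
    by_cases he : (t', m.2) = m
    · exact ht' (congrArg Prod.fst he)
    · exact (hM.2 (t', m.2) hmem m hm he).2.2.2 rfl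
  have hmarg1 : ∀ m ∈ M, F.marg m.1 = pairFlow F.f m.1 m.2 := by
    intro m hm
    show margOf F.f m.1 = _
    unfold margOf
    have e1 : (∑ v, pairFlow F.f m.1 v) = pairFlow F.f m.1 m.2 :=
      Finset.sum_eq_single_of_mem m.2 (Finset.mem_univ _) fun v _ hv =>
        pairFlow_zero_of_not_mem F (hMc m hm v hv)
    have e2 : (∑ u, pairFlow F.f u m.1) = 0 :=
      Finset.sum_eq_zero fun u _ => pairFlow_zero_of_not_mem F (hMa m hm u)
    rw [e1, e2, add_zero]
  have hmarg2 : ∀ m ∈ M, F.marg m.2 = pairFlow F.f m.1 m.2 := by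
    intro m hm
    show margOf F.f m.2 = _
    unfold margOf
    have e1 : (∑ v, pairFlow F.f m.2 v) = 0 :=
      Finset.sum_eq_zero fun v _ => pairFlow_zero_of_not_mem F (hMb m hm v)
    have e2 : (∑ u, pairFlow F.f u m.2) = pairFlow F.f m.1 m.2 :=
      Finset.sum_eq_single_of_mem m.1 (Finset.mem_univ _) fun u _ hu =>
        pairFlow_zero_of_not_mem F (hMd m hm u hu)
    rw [e1, e2, zero_add]
  have hred1 : ∀ m ∈ M, ∀ v : V, pairFlow (symG F g α) m.1 v
      = (lamOf F g α m.1 * pairFlow g.g m.1 v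
          + lamOf F g α m.2 * pairFlow g.g m.2 v) / 6 := by
    intro m hm v
    rw [pairFlow_symG]
    have hterm : ∀ t : V, lamOf F g α t / F.marg t *
        ((pairFlow F.f m.1 t + pairFlow F.f t m.1) * pairFlow g.g t v)
        = if t = m.2 then lamOf F g α m.2 * pairFlow g.g m.2 v else 0 := by
      intro t
      by_cases ht : t = m.2
      · subst ht
        rw [if_pos rfl, pairFlow_zero_of_not_mem F (hMb m hm m.1), add_zero,
          ← hmarg2 m hm, ← mul_assoc, coef_mul_marg]
      · rw [if_neg ht, pairFlow_zero_of_not_mem F (hMc m hm t ht),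
          pairFlow_zero_of_not_mem F (hMa m hm t), add_zero, zero_mul, mul_zero]
    rw [Finset.sum_congr rfl fun t _ => hterm t,
      Finset.sum_ite_eq' Finset.univ m.2
        (fun _ => lamOf F g α m.2 * pairFlow g.g m.2 v)]
    simp only [Finset.mem_univ, if_true]
    ring
  have hred2 : ∀ m ∈ M, ∀ v : V, pairFlow (symG F g α) m.2 v
      = (lamOf F g α m.1 * pairFlow g.g m.1 v
          + lamOf F g α m.2 * pairFlow g.g m.2 v) / 6 := by
    intro m hm v
    rw [pairFlow_symG]
    have hterm : ∀ t : V, lamOf F g α t / F.marg t *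
        ((pairFlow F.f m.2 t + pairFlow F.f t m.2) * pairFlow g.g t v)
        = if t = m.1 then lamOf F g α m.1 * pairFlow g.g m.1 v else 0 := by
      intro t
      by_cases ht : t = m.1
      · subst ht
        rw [if_pos rfl, pairFlow_zero_of_not_mem F (hMb m hm m.1), zero_add,
          ← hmarg1 m hm, ← mul_assoc, coef_mul_marg]
      · rw [if_neg ht, pairFlow_zero_of_not_mem F (hMb m hm t),
          pairFlow_zero_of_not_mem F (hMd m hm t ht), add_zero, zero_mul, mul_zero]
    rw [Finset.sum_congr rfl fun t _ => hterm t,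
      Finset.sum_ite_eq' Finset.univ m.1
        (fun _ => lamOf F g α m.1 * pairFlow g.g m.1 v)]
    simp only [Finset.mem_univ, if_true]
    ring
  have hpf3 : ∀ u v : V, pairFlow (fun u v p => F.f u v p / 3) u v
      = pairFlow F.f u v / 3 := by
    intro u v
    unfold pairFlow
    rw [Finset.sum_div]
  have hmargF1 : ∀ y : V, margOf (fun u v p => F.f u v p / 3) y = margOf F.f y / 3 := by
    intro y
    unfold margOf
    rw [add_div]
    congr 1
    · rw [Finset.sum_div]
      exact Finset.sum_congr rfl fun x _ => hpf3 _ _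
    · rw [Finset.sum_div]
      exact Finset.sum_congr rfl fun x _ => hpf3 _ _
  refine ⟨⟨fun u v p => F.f u v p / 3,
      fun u v p => div_nonneg (F.nonneg u v p) (by norm_num),
      fun u v h p => by show F.f u v p / 3 = 0; rw [F.supp u v h p, zero_div],
      fun m hm => ?_, fun w => ?_⟩, fun u v p => rfl, ?_, ?_⟩
  · rw [hpf3]
    have h1 := F.le_one m hm
    have h2 := pairFlow_nonneg' F.nonneg m.1 m.2
    linarith
  · rw [vertLoad_div F.f 3 w]
    have h3 := F.feas w
    have h4 : (0:ℝ) ≤ (cap w : ℝ) := Nat.cast_nonneg _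
    linarith
  · show valueOf _ M = valueOf F.f M / 3
    unfold valueOf
    rw [Finset.sum_div]
    exact Finset.sum_congr rfl fun m _ => hpf3 m.1 m.2
  · refine ⟨⟨symG F g α, symG_nonneg h0α, symG_ends, symG_feas hα hkey⟩, ?_, ?_⟩
    · intro z hz
      obtain ⟨m, hm, hzm⟩ := hz
      have ht1 : Terminal M m.1 := ⟨m, hm, Or.inl rfl⟩
      have ht2 : Terminal M m.2 := ⟨m, hm, Or.inr rfl⟩
      have e1 : lamOf F g α m.1 * g.fromAmt m.1 = F.marg m.1 / α :=
        lam_mul_fromAmt h0α (hg m.1 ht1)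
      have e2 : lamOf F g α m.2 * g.fromAmt m.2 = F.marg m.2 / α :=
        lam_mul_fromAmt h0α (hg m.2 ht2)
      have hmm : F.marg m.1 = F.marg m.2 := hbal m hm
      rcases hzm with h | h
      · subst h
        show margOf (fun u v p => F.f u v p / 3) m.1 / α
            ≤ ∑ v, pairFlow (symG F g α) m.1 v
        have eR : (∑ v, pairFlow (symG F g α) m.1 v)
            = (lamOf F g α m.1 * g.fromAmt m.1
                + lamOf F g α m.2 * g.fromAmt m.2) / 6 := by
          rw [Finset.sum_congr rfl fun v _ => hred1 m hm v, ← Finset.sum_div,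
            Finset.sum_add_distrib, ← Finset.mul_sum, ← Finset.mul_sum]
          unfold NFlowToSet.fromAmt
          rfl
        rw [hmargF1 m.1, eR, e1, e2, ← hmm]
        have hb : margOf F.f m.1 = F.marg m.1 := rfl
        rw [hb]
        exact le_of_eq (by ring)
      · subst h
        show margOf (fun u v p => F.f u v p / 3) m.2 / α
            ≤ ∑ v, pairFlow (symG F g α) m.2 v
        have eR : (∑ v, pairFlow (symG F g α) m.2 v)
            = (lamOf F g α m.1 * g.fromAmt m.1
                + lamOf F g α m.2 * g.fromAmt m.2) / 6 := by
          rw [Finset.sum_congr rfl fun v _ => hred2 m hm v, ← Finset.sum_div,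
            Finset.sum_add_distrib, ← Finset.mul_sum, ← Finset.mul_sum]
          unfold NFlowToSet.fromAmt
          rfl
        rw [hmargF1 m.2, eR, e1, e2, hmm]
        have hb : margOf F.f m.2 = F.marg m.2 := rfl
        rw [hb]
        exact le_of_eq (by ring)
    · intro m hm v _
      show pairFlow (symG F g α) m.1 v = pairFlow (symG F g α) m.2 v
      rw [hred1 m hm v, hred2 m hm v]


end Paper
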